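/- Existence of the tensor Moore–Penrose pseudoinverse: for every tensor X : ZMod n → Matrix (Fin I₁) (Fin I₂) ℝ (n ≥ 1) there exists a tensor P : ZMod n → Matrix (Fin I₂) (Fin I₁) ℝ satisfying the four Penrose equations under the t-product: X ∗ P ∗ X = X, P ∗ X ∗ P = P, (X ∗ P)ᵀ = X ∗ P, and (P ∗ X)ᵀ = P ∗ X. -/

import Mathlib

open Matrix

variable {n : ℕ}

/-- The t-product of two third-order tensors, modeled as circular convolution
of frontal slices. -/
noncomputable def tMul [NeZero n] {a b c : ℕ}
    (X : ZMod n → Matrix (Fin a) (Fin b) ℝ) (Y : ZMod n → Matrix (Fin b) (Fin c) ℝ) :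
    ZMod n → Matrix (Fin a) (Fin c) ℝ :=
  fun k => ∑ j : ZMod n, X (k - j) * Y j

/-- The tensor transpose: transpose every frontal slice and reverse the order of
the frontal slices 2 through n. -/
def tTranspose {a b : ℕ} (X : ZMod n → Matrix (Fin a) (Fin b) ℝ) :
    ZMod n → Matrix (Fin b) (Fin a) ℝ :=
  fun k => (X (-k))ᵀ

/-- The identity tensor: the first frontal slice is the identity matrix and all
other frontal slices are zero. -/
def tId (n m : ℕ) : ZMod n → Matrix (Fin m) (Fin m) ℝ :=
  fun k => if k = 0 then 1 else 0

/-- A tensor is orthogonal if `Qᵀ ∗ Q = Q ∗ Qᵀ = I` under the t-product. -/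
def tOrthogonal [NeZero n] {m : ℕ} (Q : ZMod n → Matrix (Fin m) (Fin m) ℝ) : Prop :=
  tMul (tTranspose Q) Q = tId n m ∧ tMul Q (tTranspose Q) = tId n m

set_option linter.unusedSectionVars false

section MatrixMP

variable {p q : Type*} [Fintype p] [DecidableEq p] [Fintype q] [DecidableEq q]

private lemma aux_diag_vanish (M : Matrix p q ℝ) (lam : q → ℝ)
    (h : Mᵀ * M = Matrix.diagonal lam) :
    M * Matrix.diagonal (fun i => if lam i = 0 then (0:ℝ) else 1) = M := by
  ext i j
  rw [Matrix.mul_diagonal]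
  by_cases hj : lam j = 0
  · suffices hMij : M i j = 0 by simp [hj, hMij]
    have hsum : ∑ k, M k j * M k j = 0 := by
      have := congrFun (congrFun h j) j
      simpa [Matrix.mul_apply, Matrix.diagonal_apply_eq, Matrix.transpose_apply, hj] using this
    have := (Finset.sum_eq_zero_iff_of_nonneg (by intro k _; exact mul_self_nonneg _)).mp hsum
    exact mul_self_eq_zero.mp (this i (Finset.mem_univ i))
  · simp [hj]

private lemma matrix_mp_exists (A : Matrix p q ℝ) :
    ∃ B : Matrix q p ℝ, A * B * A = A ∧ B * A * B = B ∧ (A * B)ᵀ = A * B ∧ (B * A)ᵀ = B * A := by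
  have hH : (Aᵀ * A).IsHermitian := by
    rw [Matrix.IsHermitian, Matrix.conjTranspose_eq_transpose_of_trivial]
    simp [Matrix.transpose_mul, Matrix.mul_assoc]
  set U : Matrix q q ℝ := ↑hH.eigenvectorUnitary with hUdef
  set lam : q → ℝ := hH.eigenvalues with hlamdef
  have hstar : star U = Uᵀ := by
    rw [Matrix.star_eq_conjTranspose, Matrix.conjTranspose_eq_transpose_of_trivial]
  have hU1 : Uᵀ * U = 1 := by
    rw [← hstar]; exact Matrix.mem_unitaryGroup_iff'.mp hH.eigenvectorUnitary.2
  have hU2 : U * Uᵀ = 1 := by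
    rw [← hstar]; exact Matrix.mem_unitaryGroup_iff.mp hH.eigenvectorUnitary.2
  have hspec : Aᵀ * A = U * Matrix.diagonal lam * Uᵀ := by
    have h0 := hH.spectral_theorem
    rw [Unitary.conjStarAlgAut_apply, hstar] at h0
    rw [h0]; rfl
  set g : q → ℝ := fun i => if lam i = 0 then 0 else (lam i)⁻¹ with hgdef
  set ind : q → ℝ := fun i => if lam i = 0 then 0 else 1 with hinddef
  have hgd : Matrix.diagonal g * Matrix.diagonal lam = Matrix.diagonal ind := by
    rw [Matrix.diagonal_mul_diagonal]
    have hfun : (fun i => g i * lam i) = ind := by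
      funext i
      by_cases hi : lam i = 0
      · simp [hgdef, hinddef, hi]
      · simp only [hgdef, hinddef, if_neg hi]
        exact inv_mul_cancel₀ hi
    rw [hfun]
  have hindg : Matrix.diagonal ind * Matrix.diagonal g = Matrix.diagonal g := by
    rw [Matrix.diagonal_mul_diagonal]
    have hfun : (fun i => ind i * g i) = g := by
      funext i
      by_cases hi : lam i = 0
      · simp [hgdef, hinddef, hi]
      · simp only [hgdef, hinddef, if_neg hi, one_mul]
    rw [hfun]
  have e1 : Uᵀ * (Aᵀ * A) = Matrix.diagonal lam * Uᵀ := by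
    rw [hspec, ← Matrix.mul_assoc, ← Matrix.mul_assoc, hU1, Matrix.one_mul]
  have hMM : (A * U)ᵀ * (A * U) = Matrix.diagonal lam := by
    rw [Matrix.transpose_mul, Matrix.mul_assoc, ← Matrix.mul_assoc Aᵀ A U,
      ← Matrix.mul_assoc Uᵀ, e1, Matrix.mul_assoc, hU1, Matrix.mul_one]
  have hMind : (A * U) * Matrix.diagonal ind = A * U := aux_diag_vanish (A * U) lam hMM
  set B : Matrix q p ℝ := U * (Matrix.diagonal g * (Uᵀ * Aᵀ)) with hBdef
  have e2 : Matrix.diagonal g * (Matrix.diagonal lam * Uᵀ) = Matrix.diagonal ind * Uᵀ := by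
    rw [← Matrix.mul_assoc, hgd]
  have hBA : B * A = U * (Matrix.diagonal ind * Uᵀ) := by
    rw [hBdef]
    simp only [Matrix.mul_assoc]
    rw [e1, e2]
  refine ⟨B, ?_, ?_, ?_, ?_⟩
  · -- A * B * A = A
    rw [hBdef]
    simp only [Matrix.mul_assoc]
    rw [e1, e2]
    rw [← Matrix.mul_assoc U (Matrix.diagonal ind) Uᵀ,
      ← Matrix.mul_assoc A (U * Matrix.diagonal ind) Uᵀ,
      ← Matrix.mul_assoc A U (Matrix.diagonal ind), hMind,
      Matrix.mul_assoc, hU2, Matrix.mul_one]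
  · -- B * A * B = B
    rw [hBA, hBdef]
    simp only [Matrix.mul_assoc]
    rw [← Matrix.mul_assoc Uᵀ U, hU1, Matrix.one_mul,
      ← Matrix.mul_assoc (Matrix.diagonal ind) (Matrix.diagonal g), hindg]
  · -- (A * B)ᵀ = A * B
    rw [hBdef]
    simp only [Matrix.transpose_mul, Matrix.transpose_transpose,
      Matrix.diagonal_transpose, Matrix.mul_assoc]
  · -- (B * A)ᵀ = B * A
    rw [hBA]
    simp only [Matrix.transpose_mul, Matrix.transpose_transpose,
      Matrix.diagonal_transpose, Matrix.mul_assoc]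

private lemma matrix_mp_unique (A : Matrix p q ℝ) (B C : Matrix q p ℝ)
    (hB1 : A * B * A = A) (hB2 : B * A * B = B) (hB3 : (A * B)ᵀ = A * B) (hB4 : (B * A)ᵀ = B * A)
    (hC1 : A * C * A = A) (hC2 : C * A * C = C) (hC3 : (A * C)ᵀ = A * C)
    (hC4 : (C * A)ᵀ = C * A) : B = C := by
  have hAt : Aᵀ = Aᵀ * Cᵀ * Aᵀ := by
    conv_lhs => rw [← hC1]
    simp [Matrix.transpose_mul, Matrix.mul_assoc]
  have hAB : A * B = A * C := by
    calc A * B = (A * B)ᵀ := hB3.symm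
      _ = Bᵀ * Aᵀ := by rw [Matrix.transpose_mul]
      _ = Bᵀ * (Aᵀ * Cᵀ * Aᵀ) := by rw [← hAt]
      _ = (Bᵀ * Aᵀ) * (Cᵀ * Aᵀ) := by simp only [Matrix.mul_assoc]
      _ = (A * B)ᵀ * (A * C)ᵀ := by rw [Matrix.transpose_mul, Matrix.transpose_mul]
      _ = (A * B) * (A * C) := by rw [hB3, hC3]
      _ = (A * B * A) * C := by simp only [Matrix.mul_assoc]
      _ = A * C := by rw [hB1]
  have hBA : B * A = C * A := by
    calc B * A = (B * A)ᵀ := hB4.symm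
      _ = Aᵀ * Bᵀ := by rw [Matrix.transpose_mul]
      _ = (Aᵀ * Cᵀ * Aᵀ) * Bᵀ := by rw [← hAt]
      _ = (Aᵀ * Cᵀ) * (Aᵀ * Bᵀ) := by simp only [Matrix.mul_assoc]
      _ = (C * A)ᵀ * (B * A)ᵀ := by rw [Matrix.transpose_mul, Matrix.transpose_mul]
      _ = (C * A) * (B * A) := by rw [hB4, hC4]
      _ = C * (A * B * A) := by simp only [Matrix.mul_assoc]
      _ = C * A := by rw [hB1]
  calc B = B * A * B := hB2.symm
    _ = C * A * B := by rw [hBA]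
    _ = C * (A * B) := by rw [Matrix.mul_assoc]
    _ = C * (A * C) := by rw [hAB]
    _ = C * A * C := by rw [Matrix.mul_assoc]
    _ = C := hC2

end MatrixMP

/-- block-circulant matrix of a tensor -/
def circ {a b : ℕ} (X : ZMod n → Matrix (Fin a) (Fin b) ℝ) :
    Matrix (ZMod n × Fin a) (ZMod n × Fin b) ℝ :=
  fun p r => X (p.1 - r.1) p.2 r.2

lemma circ_tMul [NeZero n] {a b c : ℕ} (X : ZMod n → Matrix (Fin a) (Fin b) ℝ)
    (Y : ZMod n → Matrix (Fin b) (Fin c) ℝ) :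
    circ (tMul X Y) = circ X * circ Y := by
  ext ⟨k, i⟩ ⟨l, j⟩
  simp only [circ, tMul, Matrix.mul_apply, Matrix.sum_apply, Fintype.sum_prod_type]
  refine Fintype.sum_equiv (Equiv.addRight l) _ _ fun m => ?_
  simp only [Equiv.coe_addRight]
  have h1 : k - (m + l) = k - l - m := by ring
  have h2 : m + l - l = m := by ring
  rw [h1, h2]

lemma circ_tTranspose {a b : ℕ} (X : ZMod n → Matrix (Fin a) (Fin b) ℝ) :
    circ (tTranspose X) = (circ X)ᵀ := by
  ext ⟨k, i⟩ ⟨l, j⟩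
  simp [circ, tTranspose, Matrix.transpose_apply, neg_sub]

lemma circ_inj {a b : ℕ} {X Y : ZMod n → Matrix (Fin a) (Fin b) ℝ}
    (h : circ X = circ Y) : X = Y := by
  funext k
  ext i j
  have := congrFun (congrFun h (k, i)) (0, j)
  simpa [circ] using this

/-- the shift reindexing equiv -/
def shEq (a : ℕ) (d : ZMod n) : (ZMod n × Fin a) ≃ (ZMod n × Fin a) :=
  (Equiv.addRight d).prodCongr (Equiv.refl _)

lemma circ_shift {a b : ℕ} (X : ZMod n → Matrix (Fin a) (Fin b) ℝ) (d : ZMod n) :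
    (circ X).submatrix (shEq a d) (shEq b d) = circ X := by
  ext ⟨k, i⟩ ⟨l, j⟩
  simp only [Matrix.submatrix_apply, circ, shEq, Equiv.prodCongr_apply, Equiv.coe_addRight,
    Equiv.coe_refl, Prod.map]
  have h : k + d - (l + d) = k - l := by ring
  rw [h]; rfl


/-- Existence of the tensor Moore–Penrose pseudoinverse under the t-product. -/
theorem tMoorePenrose_exists (n I₁ I₂ : ℕ) [NeZero n]
    (X : ZMod n → Matrix (Fin I₁) (Fin I₂) ℝ) :
    ∃ P : ZMod n → Matrix (Fin I₂) (Fin I₁) ℝ,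
      tMul (tMul X P) X = X ∧ tMul (tMul P X) P = P ∧
      tTranspose (tMul X P) = tMul X P ∧ tTranspose (tMul P X) = tMul P X := by
  obtain ⟨B, h1, h2, h3, h4⟩ := matrix_mp_exists (circ X)
  have hsm : ∀ {a b c : ℕ} (d : ZMod n) (M : Matrix (ZMod n × Fin a) (ZMod n × Fin b) ℝ)
      (N : Matrix (ZMod n × Fin b) (ZMod n × Fin c) ℝ),
      (M * N).submatrix (shEq a d) (shEq c d)
        = M.submatrix (shEq a d) (shEq b d) * N.submatrix (shEq b d) (shEq c d) :=
    fun d M N => (Matrix.submatrix_mul_equiv M N _ (shEq _ d) _).symm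
  have hshift : ∀ d : ZMod n, B.submatrix (shEq I₂ d) (shEq I₁ d) = B := by
    intro d
    have hA := circ_shift X d
    have keyXB : circ X * B.submatrix (shEq I₂ d) (shEq I₁ d)
        = (circ X * B).submatrix (shEq I₁ d) (shEq I₁ d) := by
      rw [hsm, hA]
    have keyBX : B.submatrix (shEq I₂ d) (shEq I₁ d) * circ X
        = (B * circ X).submatrix (shEq I₂ d) (shEq I₂ d) := by
      rw [hsm, hA]
    refine matrix_mp_unique (circ X) _ B ?_ ?_ ?_ ?_ h1 h2 h3 h4
    · rw [keyXB]
      nth_rw 2 [← hA]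
      rw [← hsm, h1, hA]
    · rw [keyBX, ← hsm, h2]
    · rw [keyXB, Matrix.transpose_submatrix, h3]
    · rw [keyBX, Matrix.transpose_submatrix, h4]
  have hBd : ∀ (d k : ZMod n) (i : Fin I₂) (l : ZMod n) (j : Fin I₁),
      B (k + d, i) (l + d, j) = B (k, i) (l, j) := by
    intro d k i l j
    have := congrFun (congrFun (hshift d) (k, i)) (l, j)
    simpa [shEq, Matrix.submatrix_apply] using this
  set P : ZMod n → Matrix (Fin I₂) (Fin I₁) ℝ :=
    fun d => Matrix.of fun i j => B (d, i) (0, j) with hPdef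
  have hcircP : circ P = B := by
    ext ⟨k, i⟩ ⟨l, j⟩
    show P (k - l) i j = B (k, i) (l, j)
    have h := hBd l (k - l) i 0 j
    have hk : k - l + l = k := by ring
    rw [hk, zero_add] at h
    exact h.symm
  refine ⟨P, ?_, ?_, ?_, ?_⟩
  · apply circ_inj
    rw [circ_tMul, circ_tMul, hcircP, h1]
  · apply circ_inj
    rw [circ_tMul, circ_tMul, hcircP, h2]
  · apply circ_inj
    rw [circ_tTranspose, circ_tMul, hcircP]
    exact h3
  · apply circ_inj
    rw [circ_tTranspose, circ_tMul, hcircP]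
    exact h4
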